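/- Let X = (X_v, v ∈ V) be a discrete random vector with strictly positive distribution and multivariate logistic parameters η^M = λ^M_M for M ∈ P_0(V). If D ⊆ V is partitioned into classes C_1,...,C_r, then X_{C_1}, ..., X_{C_r} are mutually independent if and only if η^M = 0 for all M in Q(C_1,...,C_r), the family of subsets of D meeting at least two classes. -/

import Mathlib

open Finset

set_option maxHeartbeats 1000000
set_option linter.unusedSectionVars false
set_option linter.unusedVariables false


/-- The marginal distribution of `p` over the margin `M`, as a function of a full cell
depending only on its `M`-coordinates. -/
noncomputable def marg {V : Type*} [Fintype V] [DecidableEq V] {b : V → ℕ}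
    (p : ((v : V) → Fin (b v)) → ℝ) (M : Finset V) (i : (v : V) → Fin (b v)) : ℝ :=
  ∑ k : (v : V) → Fin (b v), if ∀ v ∈ M, k v = i v then p k else 0

/-- The multivariate logistic parameter `η^M = λ^M_M`: the highest-order log-linear
interaction of the marginal distribution `p_M`, obtained by Möbius inversion of
`log p_M` with baseline cell `(0,...,0)`. -/
noncomputable def mlogit {V : Type*} [Fintype V] [DecidableEq V] {b : V → ℕ}
    (hb : ∀ v, 0 < b v) (p : ((v : V) → Fin (b v)) → ℝ)
    (M : Finset V) (i : (v : V) → Fin (b v)) : ℝ :=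
  ∑ L ∈ M.powerset, (-1 : ℝ) ^ (M.card - L.card) *
    Real.log (marg p M (fun v => if v ∈ L then i v else ⟨0, hb v⟩))


section aux
variable {V : Type*} [Fintype V] [DecidableEq V] {b : V → ℕ}

lemma marg_congr (p : ((v : V) → Fin (b v)) → ℝ) {M : Finset V}
    {i j : (v : V) → Fin (b v)} (h : ∀ v ∈ M, i v = j v) :
    marg p M i = marg p M j := by
  unfold marg
  refine Finset.sum_congr rfl fun k _ => ?_
  refine if_congr ⟨fun hk v hv => ?_, fun hk v hv => ?_⟩ rfl rfl
  · rw [← h v hv]; exact hk v hv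
  · rw [h v hv]; exact hk v hv

lemma marg_empty (p : ((v : V) → Fin (b v)) → ℝ) (i : (v : V) → Fin (b v)) :
    marg p ∅ i = ∑ k, p k := by
  unfold marg; refine Finset.sum_congr rfl fun k _ => ?_; simp

lemma marg_pos (p : ((v : V) → Fin (b v)) → ℝ) (hpos : ∀ k, 0 < p k)
    (M : Finset V) (i : (v : V) → Fin (b v)) : 0 < marg p M i := by
  unfold marg
  refine Finset.sum_pos' (fun k _ => ?_) ⟨i, Finset.mem_univ i, ?_⟩
  · split
    · exact (hpos k).le
    · exact le_refl 0
  · simp [hpos i]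

lemma marg_collapse (p : ((v : V) → Fin (b v)) → ℝ) {M : Finset V} {v : V} (hv : v ∈ M)
    (i : (v : V) → Fin (b v)) :
    ∑ a : Fin (b v), marg p M (Function.update i v a) = marg p (M.erase v) i := by
  unfold marg
  rw [Finset.sum_comm]
  refine Finset.sum_congr rfl fun k _ => ?_
  have hcond : ∀ a : Fin (b v), (∀ w ∈ M, k w = Function.update i v a w) ↔
      (a = k v ∧ ∀ w ∈ M.erase v, k w = i w) := by
    intro a
    constructor
    · intro h
      refine ⟨?_, fun w hw => ?_⟩
      · have := h v hv; rw [Function.update_self] at this; exact this.symm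
      · have hw' := Finset.mem_erase.mp hw
        have := h w hw'.2
        rwa [Function.update_of_ne hw'.1] at this
    · rintro ⟨ha, h⟩ w hw
      by_cases hwv : w = v
      · subst hwv; rw [Function.update_self]; exact ha.symm
      · rw [Function.update_of_ne hwv]; exact h w (Finset.mem_erase.mpr ⟨hwv, hw⟩)
  calc ∑ a : Fin (b v), (if ∀ w ∈ M, k w = Function.update i v a w then p k else 0)
      = ∑ a : Fin (b v), (if a = k v ∧ (∀ w ∈ M.erase v, k w = i w) then p k else 0) :=
        Finset.sum_congr rfl fun a _ => if_congr (hcond a) rfl rfl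
    _ = _ := by
        by_cases hQ : ∀ w ∈ M.erase v, k w = i w
        · rw [if_pos hQ,
            Finset.sum_congr rfl (fun a _ => if_congr (and_iff_left hQ) rfl rfl)]
          simp
        · rw [if_neg hQ]
          exact Finset.sum_eq_zero fun a _ => if_neg fun hc => hQ hc.2

end aux
section aux2
variable {V : Type*} [Fintype V] [DecidableEq V] {b : V → ℕ}

lemma sum_update_mul (hb : ∀ v, 0 < b v) (K : ((v : V) → Fin (b v)) → ℝ) (v : V) :
    ∑ t : (v : V) → Fin (b v), ∑ a : Fin (b v), K (Function.update t v a)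
      = (b v : ℝ) * ∑ t, K t := by
  have hF : Function.Bijective (fun x : ((w : V) → Fin (b w)) × Fin (b v) =>
      ((Function.update x.1 v x.2, x.1 v) : ((w : V) → Fin (b w)) × Fin (b v))) := by
    apply Function.Involutive.bijective
    intro x
    simp [Function.update_idem, Function.update_eq_self]
  have h := Fintype.sum_bijective _ hF
      (fun x : ((w : V) → Fin (b w)) × Fin (b v) => K (Function.update x.1 v x.2))
      (fun x : ((w : V) → Fin (b w)) × Fin (b v) => K x.1) (fun x => rfl)
  calc ∑ t : (v : V) → Fin (b v), ∑ a : Fin (b v), K (Function.update t v a)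
      = ∑ x : ((w : V) → Fin (b w)) × Fin (b v), K (Function.update x.1 v x.2) :=
        (Fintype.sum_prod_type
          (fun x : ((w : V) → Fin (b w)) × Fin (b v) => K (Function.update x.1 v x.2))).symm
    _ = ∑ x : ((w : V) → Fin (b w)) × Fin (b v), K x.1 := h
    _ = ∑ t : (v : V) → Fin (b v), ∑ _a : Fin (b v), K t :=
        Fintype.sum_prod_type (fun x : ((w : V) → Fin (b w)) × Fin (b v) => K x.1)
    _ = (b v : ℝ) * ∑ t, K t := by
        simp [Finset.sum_const, nsmul_eq_mul, Finset.mul_sum]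

lemma transfer (hb : ∀ v, 0 < b v) (f g φ : ((v : V) → Fin (b v)) → ℝ) (v : V)
    (hfg : ∀ t, ∑ a : Fin (b v), f (Function.update t v a)
      = ∑ a : Fin (b v), g (Function.update t v a))
    (hφ : ∀ t a, φ (Function.update t v a) = φ t) :
    ∑ t, f t * φ t = ∑ t, g t * φ t := by
  have key : ∀ h : ((v : V) → Fin (b v)) → ℝ,
      ∑ t, (∑ a : Fin (b v), h (Function.update t v a)) * φ t
        = (b v : ℝ) * ∑ t, h t * φ t := by
    intro h
    calc ∑ t, (∑ a : Fin (b v), h (Function.update t v a)) * φ t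
        = ∑ t, ∑ a : Fin (b v),
            (h (Function.update t v a) * φ (Function.update t v a)) := by
          refine Finset.sum_congr rfl fun t _ => ?_
          rw [Finset.sum_mul]
          exact Finset.sum_congr rfl fun a _ => by rw [hφ]
      _ = (b v : ℝ) * ∑ t, h t * φ t := sum_update_mul hb (fun t => h t * φ t) v
  have hbv : (b v : ℝ) ≠ 0 := Nat.cast_ne_zero.mpr (hb v).ne'
  refine mul_left_cancel₀ hbv ?_
  rw [← key f, ← key g]
  exact Finset.sum_congr rfl fun t _ => by rw [hfg t]

lemma alt_sum_zero {M A : Finset V} {w : V} (hw : w ∈ M) (hwA : w ∉ A)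
    (f : Finset V → ℝ) (hf : ∀ L ∈ M.powerset, f L = f (L ∩ A)) :
    ∑ L ∈ M.powerset, (-1 : ℝ) ^ (M.card - L.card) * f L = 0 := by
  obtain ⟨M', hwM', rfl⟩ : ∃ M', w ∉ M' ∧ M = insert w M' :=
    ⟨M.erase w, Finset.notMem_erase w M, (Finset.insert_erase hw).symm⟩
  rw [Finset.sum_powerset_insert hwM', ← Finset.sum_add_distrib]
  refine Finset.sum_eq_zero fun L hL => ?_
  have hLM' : L ⊆ M' := Finset.mem_powerset.mp hL
  have hwL : w ∉ L := fun h => hwM' (hLM' h)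
  have hcards : (insert w M').card = M'.card + 1 := Finset.card_insert_of_notMem hwM'
  have hcardL : (insert w L).card = L.card + 1 := Finset.card_insert_of_notMem hwL
  have hLc : L.card ≤ M'.card := Finset.card_le_card hLM'
  have hfeq : f (insert w L) = f L := by
    have h1 : f (insert w L) = f ((insert w L) ∩ A) := by
      refine hf _ (Finset.mem_powerset.mpr ?_)
      exact Finset.insert_subset_insert w hLM'
    have h2 : (insert w L) ∩ A = L ∩ A := by
      ext u
      simp only [Finset.mem_inter, Finset.mem_insert]
      constructor
      · rintro ⟨hu | hu, hA⟩
        · exact absurd (hu ▸ hA) hwA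
        · exact ⟨hu, hA⟩
      · rintro ⟨hu, hA⟩; exact ⟨Or.inr hu, hA⟩
    have h3 : f L = f (L ∩ A) := hf _ (Finset.mem_powerset.mpr (hLM'.trans (Finset.subset_insert w M')))
    rw [h1, h2, ← h3]
  rw [hfeq, hcards, hcardL]
  have e1 : M'.card + 1 - L.card = (M'.card - L.card) + 1 := by omega
  have e2 : M'.card + 1 - (L.card + 1) = M'.card - L.card := by omega
  rw [e1, e2, pow_succ]
  ring

end aux2

section aux3
variable {V : Type*} [Fintype V] [DecidableEq V] {b : V → ℕ}

/-- The cell equal to `i` on `L` and baseline `0` elsewhere. -/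
def bcell (hb : ∀ v, 0 < b v) (L : Finset V) (i : (v : V) → Fin (b v)) :
    (v : V) → Fin (b v) := fun v => if v ∈ L then i v else ⟨0, hb v⟩

lemma bcell_update_not_mem (hb : ∀ v, 0 < b v) {L : Finset V} {v : V} (hv : v ∉ L)
    (t : (v : V) → Fin (b v)) (a : Fin (b v)) :
    bcell hb L (Function.update t v a) = bcell hb L t := by
  funext w
  unfold bcell
  by_cases hw : w ∈ L
  · rw [if_pos hw, if_pos hw, Function.update_of_ne (fun h : w = v => hv (h ▸ hw))]
  · rw [if_neg hw, if_neg hw]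

lemma bcell_agree (hb : ∀ v, 0 < b v) {L₁ L₂ N : Finset V}
    (h : ∀ v ∈ N, (v ∈ L₁ ↔ v ∈ L₂)) (i : (v : V) → Fin (b v)) :
    ∀ v ∈ N, bcell hb L₁ i v = bcell hb L₂ i v := by
  intro v hv
  unfold bcell
  by_cases h1 : v ∈ L₁
  · rw [if_pos h1, if_pos ((h v hv).mp h1)]
  · rw [if_neg h1, if_neg (fun h2 => h1 ((h v hv).mpr h2))]

lemma prod_marg_collapse (p : ((v : V) → Fin (b v)) → ℝ) {M : Finset V} {v : V} (hv : v ∈ M)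
    {r : ℕ} (C : Fin r → Finset V) {k0 : Fin r} (hk0 : v ∈ C k0)
    (honek : ∀ k, k ≠ k0 → v ∉ C k) (i : (v : V) → Fin (b v)) :
    ∑ a : Fin (b v), ∏ k, marg p (M ∩ C k) (Function.update i v a)
      = ∏ k, marg p ((M.erase v) ∩ C k) i := by
  have hother : ∀ (a : Fin (b v)) (k : Fin r), k ≠ k0 →
      marg p (M ∩ C k) (Function.update i v a) = marg p ((M.erase v) ∩ C k) i := by
    intro a k hk
    have hn : v ∉ C k := honek k hk
    have hset : M ∩ C k = (M.erase v) ∩ C k := by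
      ext w
      simp only [Finset.mem_inter, Finset.mem_erase]
      constructor
      · rintro ⟨hm, hc⟩; exact ⟨⟨fun h => hn (h ▸ hc), hm⟩, hc⟩
      · rintro ⟨⟨_, hm⟩, hc⟩; exact ⟨hm, hc⟩
    rw [hset]
    refine marg_congr p fun w hw => ?_
    have hwv : w ≠ v := (Finset.mem_erase.mp (Finset.mem_inter.mp hw).1).1
    rw [Function.update_of_ne hwv]
  have herase : (M ∩ C k0).erase v = (M.erase v) ∩ C k0 := by
    ext w
    simp only [Finset.mem_inter, Finset.mem_erase]
    tauto
  calc ∑ a : Fin (b v), ∏ k, marg p (M ∩ C k) (Function.update i v a)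
      = ∑ a : Fin (b v), marg p (M ∩ C k0) (Function.update i v a)
          * ∏ k ∈ Finset.univ.erase k0, marg p ((M.erase v) ∩ C k) i := by
        refine Finset.sum_congr rfl fun a _ => ?_
        rw [← Finset.mul_prod_erase Finset.univ _ (Finset.mem_univ k0)]
        congr 1
        exact Finset.prod_congr rfl fun k hk =>
          hother a k (Finset.ne_of_mem_erase hk)
    _ = (∑ a : Fin (b v), marg p (M ∩ C k0) (Function.update i v a))
          * ∏ k ∈ Finset.univ.erase k0, marg p ((M.erase v) ∩ C k) i := by
        rw [Finset.sum_mul]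
    _ = marg p ((M.erase v) ∩ C k0) i
          * ∏ k ∈ Finset.univ.erase k0, marg p ((M.erase v) ∩ C k) i := by
        rw [marg_collapse p (Finset.mem_inter.mpr ⟨hv, hk0⟩), herase]
    _ = ∏ k, marg p ((M.erase v) ∩ C k) i :=
        Finset.mul_prod_erase Finset.univ
          (fun k => marg p ((M.erase v) ∩ C k) i) (Finset.mem_univ k0)

end aux3


section main
variable {V : Type*} [Fintype V] [DecidableEq V] {b : V → ℕ}

lemma mlogit_eq (hb : ∀ v, 0 < b v) (p : ((v : V) → Fin (b v)) → ℝ)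
    (M : Finset V) (i : (v : V) → Fin (b v)) :
    mlogit hb p M i = ∑ L ∈ M.powerset, (-1 : ℝ) ^ (M.card - L.card) *
      Real.log (marg p M (bcell hb L i)) := rfl

end main


/-- if `D ⊆ V` is partitioned into classes `C 0, ..., C (r-1)`, then
`X_{C_1}, ..., X_{C_r}` are mutually independent iff `η^M = 0` for all subsets `M` of `D`
not contained in a single class (i.e. meeting at least two classes). -/
theorem stmt11 {V : Type*} [Fintype V] [DecidableEq V] {b : V → ℕ} (hb : ∀ v, 0 < b v)
    (p : ((v : V) → Fin (b v)) → ℝ) (hpos : ∀ i, 0 < p i) (hsum : ∑ i, p i = 1)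
    (D : Finset V) (r : ℕ) (C : Fin r → Finset V)
    (hsub : ∀ k, C k ⊆ D) (hne : ∀ k, (C k).Nonempty)
    (hdisj : ∀ j k, j ≠ k → Disjoint (C j) (C k))
    (hcover : D = Finset.univ.biUnion C) :
    (∀ i, marg p D i = ∏ k, marg p (C k) i) ↔
      (∀ M : Finset V, M ⊆ D → (∀ k, ¬ M ⊆ C k) → ∀ i, mlogit hb p M i = 0) := by
  have classOf : ∀ v ∈ D, ∃ k0, v ∈ C k0 ∧ ∀ k, k ≠ k0 → v ∉ C k := by
    intro v hv
    rw [hcover] at hv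
    obtain ⟨k0, -, hk0⟩ := Finset.mem_biUnion.mp hv
    exact ⟨k0, hk0, fun k hk hvk => (Finset.disjoint_left.mp (hdisj k k0 hk)) hvk hk0⟩
  have margpos : ∀ (M : Finset V) (i : (v : V) → Fin (b v)), 0 < marg p M i :=
    fun M i => marg_pos p hpos M i
  have marg1 : ∀ i : (v : V) → Fin (b v), marg p (∅ : Finset V) i = 1 := fun i => by
    rw [marg_empty, hsum]
  constructor
  · -- independence implies vanishing mixed parameters
    intro h M hMD hmix i
    have factor : ∀ E : Finset V, ∀ i, marg p (D \ E) i = ∏ k, marg p ((D \ E) ∩ C k) i := by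
      intro E
      induction E using Finset.induction_on with
      | empty =>
          intro i
          rw [Finset.sdiff_empty, h i]
          exact Finset.prod_congr rfl fun k _ => by
            rw [Finset.inter_eq_right.mpr (hsub k)]
      | @insert v E hvE ih =>
          intro i
          rw [Finset.sdiff_insert]
          by_cases hvD : v ∈ D
          · have hvM : v ∈ D \ E := Finset.mem_sdiff.mpr ⟨hvD, hvE⟩
            obtain ⟨k0, hk0, honek⟩ := classOf v hvD
            calc marg p ((D \ E).erase v) i
                = ∑ a : Fin (b v), marg p (D \ E) (Function.update i v a) :=
                  (marg_collapse p hvM i).symm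
              _ = ∑ a : Fin (b v), ∏ k, marg p ((D \ E) ∩ C k) (Function.update i v a) :=
                  Finset.sum_congr rfl fun a _ => ih _
              _ = ∏ k, marg p (((D \ E).erase v) ∩ C k) i :=
                  prod_marg_collapse p hvM C hk0 honek i
          · have hvM : v ∉ D \ E := fun hmem => hvD (Finset.mem_sdiff.mp hmem).1
            rw [Finset.erase_eq_of_notMem hvM]
            exact ih i
    have factorM : ∀ i, marg p M i = ∏ k, marg p (M ∩ C k) i := by
      intro i
      have hMeq : D \ (D \ M) = M := Finset.sdiff_sdiff_eq_self hMD
      have := factor (D \ M) i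
      rwa [hMeq] at this
    rw [mlogit_eq]
    have hlog : ∀ L : Finset V, Real.log (marg p M (bcell hb L i)) =
        ∑ k, Real.log (marg p (M ∩ C k) (bcell hb L i)) := by
      intro L
      rw [factorM]
      exact Real.log_prod fun k _ => (margpos _ _).ne'
    calc ∑ L ∈ M.powerset, (-1:ℝ)^(M.card - L.card) * Real.log (marg p M (bcell hb L i))
        = ∑ L ∈ M.powerset, ∑ k, (-1:ℝ)^(M.card - L.card)
            * Real.log (marg p (M ∩ C k) (bcell hb L i)) := by
          refine Finset.sum_congr rfl fun L _ => ?_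
          rw [hlog L, Finset.mul_sum]
      _ = ∑ k, ∑ L ∈ M.powerset, (-1:ℝ)^(M.card - L.card)
            * Real.log (marg p (M ∩ C k) (bcell hb L i)) := Finset.sum_comm
      _ = 0 := Finset.sum_eq_zero fun k _ => by
          obtain ⟨w, hwM, hwC⟩ := Finset.not_subset.mp (hmix k)
          refine alt_sum_zero hwM hwC _ fun L hL => ?_
          congr 1
          refine marg_congr p (bcell_agree hb (fun u hu => ?_) i)
          have huC : u ∈ C k := (Finset.mem_inter.mp hu).2
          exact ⟨fun huL => Finset.mem_inter.mpr ⟨huL, huC⟩,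
            fun huL => (Finset.mem_inter.mp huL).1⟩
  · -- vanishing mixed parameters implies independence
    intro h i
    have main : ∀ M : Finset V, M ⊆ D → ∀ i, marg p M i = ∏ k, marg p (M ∩ C k) i := by
      intro M
      induction M using Finset.strongInductionOn with
      | _ M ih =>
        intro hMD i
        by_cases hmix : ∀ k, ¬ M ⊆ C k
        · -- M meets at least two classes
          have hypos : ∀ t, 0 < ∏ k, marg p (M ∩ C k) t :=
            fun t => Finset.prod_pos fun k _ => margpos _ _
          have hlogy : ∀ t, Real.log (∏ k, marg p (M ∩ C k) t)
              = ∑ k, Real.log (marg p (M ∩ C k) t) :=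
            fun t => Real.log_prod fun k _ => (margpos _ _).ne'
          have hZx : ∀ t, ∑ L ∈ M.powerset, (-1:ℝ)^(M.card - L.card)
              * Real.log (marg p M (bcell hb L t)) = 0 := by
            intro t
            rw [← mlogit_eq]
            exact h M hMD hmix t
          have hZy : ∀ t, ∑ L ∈ M.powerset, (-1:ℝ)^(M.card - L.card)
              * (∑ k, Real.log (marg p (M ∩ C k) (bcell hb L t))) = 0 := by
            intro t
            calc ∑ L ∈ M.powerset, (-1:ℝ)^(M.card - L.card)
                  * (∑ k, Real.log (marg p (M ∩ C k) (bcell hb L t)))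
                = ∑ L ∈ M.powerset, ∑ k, (-1:ℝ)^(M.card - L.card)
                  * Real.log (marg p (M ∩ C k) (bcell hb L t)) := by
                  refine Finset.sum_congr rfl fun L _ => ?_
                  rw [Finset.mul_sum]
              _ = ∑ k, ∑ L ∈ M.powerset, (-1:ℝ)^(M.card - L.card)
                  * Real.log (marg p (M ∩ C k) (bcell hb L t)) := Finset.sum_comm
              _ = 0 := Finset.sum_eq_zero fun k _ => by
                  obtain ⟨w, hwM, hwC⟩ := Finset.not_subset.mp (hmix k)
                  refine alt_sum_zero hwM hwC _ fun L hL => ?_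
                  congr 1
                  refine marg_congr p (bcell_agree hb (fun u hu => ?_) t)
                  have huC : u ∈ C k := (Finset.mem_inter.mp hu).2
                  exact ⟨fun huL => Finset.mem_inter.mpr ⟨huL, huC⟩,
                    fun huL => (Finset.mem_inter.mp huL).1⟩
          have hZd : ∀ t, ∑ L ∈ M.powerset, (-1:ℝ)^(M.card - L.card)
              * (Real.log (marg p M (bcell hb L t))
                - ∑ k, Real.log (marg p (M ∩ C k) (bcell hb L t))) = 0 := by
            intro t
            calc ∑ L ∈ M.powerset, (-1:ℝ)^(M.card - L.card)
                  * (Real.log (marg p M (bcell hb L t))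
                    - ∑ k, Real.log (marg p (M ∩ C k) (bcell hb L t)))
                = ∑ L ∈ M.powerset, ((-1:ℝ)^(M.card - L.card)
                    * Real.log (marg p M (bcell hb L t))
                  - (-1:ℝ)^(M.card - L.card)
                    * (∑ k, Real.log (marg p (M ∩ C k) (bcell hb L t)))) :=
                  Finset.sum_congr rfl fun L _ => by ring
              _ = (∑ L ∈ M.powerset, (-1:ℝ)^(M.card - L.card)
                    * Real.log (marg p M (bcell hb L t)))
                  - ∑ L ∈ M.powerset, (-1:ℝ)^(M.card - L.card)
                    * (∑ k, Real.log (marg p (M ∩ C k) (bcell hb L t))) :=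
                  Finset.sum_sub_distrib _ _
              _ = 0 := by rw [hZx t, hZy t, sub_zero]
          have hbM : ∀ (t : (v : V) → Fin (b v)), ∀ w ∈ M, bcell hb M t w = t w :=
            fun t w hw => if_pos hw
          have hxM : ∀ t, marg p M (bcell hb M t) = marg p M t :=
            fun t => marg_congr p (hbM t)
          have hyM : ∀ t k, marg p (M ∩ C k) (bcell hb M t) = marg p (M ∩ C k) t :=
            fun t k => marg_congr p (fun w hw => hbM t w (Finset.mem_inter.mp hw).1)
          have hdecomp : ∀ t, (Real.log (marg p M t)
              - ∑ k, Real.log (marg p (M ∩ C k) t))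
              = ∑ L ∈ M.powerset.erase M, (-((-1:ℝ)^(M.card - L.card)))
                * (Real.log (marg p M (bcell hb L t))
                  - ∑ k, Real.log (marg p (M ∩ C k) (bcell hb L t))) := by
            intro t
            have h0 := hZd t
            rw [← Finset.add_sum_erase _ _ (Finset.mem_powerset_self M)] at h0
            rw [Nat.sub_self, pow_zero, one_mul, hxM t] at h0
            have h1 : ∑ k, Real.log (marg p (M ∩ C k) (bcell hb M t))
                = ∑ k, Real.log (marg p (M ∩ C k) t) :=
              Finset.sum_congr rfl fun k _ => by rw [hyM t k]
            rw [h1] at h0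
            have h2 : ∑ L ∈ M.powerset.erase M, (-((-1:ℝ)^(M.card - L.card)))
                * (Real.log (marg p M (bcell hb L t))
                  - ∑ k, Real.log (marg p (M ∩ C k) (bcell hb L t)))
                = - ∑ L ∈ M.powerset.erase M, ((-1:ℝ)^(M.card - L.card))
                * (Real.log (marg p M (bcell hb L t))
                  - ∑ k, Real.log (marg p (M ∩ C k) (bcell hb L t))) := by
              rw [← Finset.sum_neg_distrib]
              exact Finset.sum_congr rfl fun L _ => by ring
            rw [h2]
            linarith [h0]
          have hT : ∀ L ∈ M.powerset.erase M,
              ∑ t, (marg p M t - ∏ k, marg p (M ∩ C k) t)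
              * (Real.log (marg p M (bcell hb L t))
                - ∑ k, Real.log (marg p (M ∩ C k) (bcell hb L t))) = 0 := by
            intro L hL
            obtain ⟨hLne, hLP⟩ := Finset.mem_erase.mp hL
            have hLM : L ⊆ M := Finset.mem_powerset.mp hLP
            obtain ⟨v, hvM, hvL⟩ := Finset.not_subset.mp
              (fun hML : M ⊆ L => hLne (Finset.Subset.antisymm hLM hML))
            obtain ⟨k0, hk0, honek⟩ := classOf v (hMD hvM)
            have heq : ∀ t, ∑ a : Fin (b v), marg p M (Function.update t v a)
                = ∑ a : Fin (b v), (∏ k, marg p (M ∩ C k) (Function.update t v a)) := by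
              intro t
              rw [marg_collapse p hvM t, prod_marg_collapse p hvM C hk0 honek t]
              exact ih (M.erase v) (Finset.erase_ssubset hvM)
                ((Finset.erase_subset v M).trans hMD) t
            have hφ : ∀ (t : (v : V) → Fin (b v)) (a : Fin (b v)),
                (fun t => Real.log (marg p M (bcell hb L t))
                  - ∑ k, Real.log (marg p (M ∩ C k) (bcell hb L t)))
                  (Function.update t v a)
                = (fun t => Real.log (marg p M (bcell hb L t))
                  - ∑ k, Real.log (marg p (M ∩ C k) (bcell hb L t))) t := by
              intro t a
              simp only
              rw [bcell_update_not_mem hb hvL]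
            have htr := transfer hb (marg p M) (fun t => ∏ k, marg p (M ∩ C k) t)
              (fun t => Real.log (marg p M (bcell hb L t))
                - ∑ k, Real.log (marg p (M ∩ C k) (bcell hb L t))) v heq hφ
            calc ∑ t, (marg p M t - ∏ k, marg p (M ∩ C k) t)
                  * (Real.log (marg p M (bcell hb L t))
                    - ∑ k, Real.log (marg p (M ∩ C k) (bcell hb L t)))
                = ∑ t, (marg p M t * (Real.log (marg p M (bcell hb L t))
                    - ∑ k, Real.log (marg p (M ∩ C k) (bcell hb L t)))
                  - (∏ k, marg p (M ∩ C k) t) * (Real.log (marg p M (bcell hb L t))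
                    - ∑ k, Real.log (marg p (M ∩ C k) (bcell hb L t)))) :=
                  Finset.sum_congr rfl fun t _ => sub_mul _ _ _
              _ = 0 := by rw [Finset.sum_sub_distrib, htr, sub_self]
          have hS : ∑ t, (marg p M t - ∏ k, marg p (M ∩ C k) t)
              * (Real.log (marg p M t) - ∑ k, Real.log (marg p (M ∩ C k) t)) = 0 := by
            calc ∑ t, (marg p M t - ∏ k, marg p (M ∩ C k) t)
                  * (Real.log (marg p M t) - ∑ k, Real.log (marg p (M ∩ C k) t))
                = ∑ t, ∑ L ∈ M.powerset.erase M,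
                    (marg p M t - ∏ k, marg p (M ∩ C k) t)
                    * ((-((-1:ℝ)^(M.card - L.card)))
                      * (Real.log (marg p M (bcell hb L t))
                        - ∑ k, Real.log (marg p (M ∩ C k) (bcell hb L t)))) := by
                  refine Finset.sum_congr rfl fun t _ => ?_
                  rw [hdecomp t, Finset.mul_sum]
              _ = ∑ L ∈ M.powerset.erase M, ∑ t,
                    (marg p M t - ∏ k, marg p (M ∩ C k) t)
                    * ((-((-1:ℝ)^(M.card - L.card)))
                      * (Real.log (marg p M (bcell hb L t))
                        - ∑ k, Real.log (marg p (M ∩ C k) (bcell hb L t)))) :=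
                  Finset.sum_comm
              _ = 0 := Finset.sum_eq_zero fun L hL => by
                  have h3 : ∑ t, (marg p M t - ∏ k, marg p (M ∩ C k) t)
                      * ((-((-1:ℝ)^(M.card - L.card)))
                        * (Real.log (marg p M (bcell hb L t))
                          - ∑ k, Real.log (marg p (M ∩ C k) (bcell hb L t))))
                      = (-((-1:ℝ)^(M.card - L.card))) * ∑ t,
                        (marg p M t - ∏ k, marg p (M ∩ C k) t)
                        * (Real.log (marg p M (bcell hb L t))
                          - ∑ k, Real.log (marg p (M ∩ C k) (bcell hb L t))) := by
                    rw [Finset.mul_sum]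
                    exact Finset.sum_congr rfl fun t _ => by ring
                  rw [h3, hT L hL, mul_zero]
          have hnn : ∀ t : (v : V) → Fin (b v),
              0 ≤ (marg p M t - ∏ k, marg p (M ∩ C k) t)
              * (Real.log (marg p M t) - ∑ k, Real.log (marg p (M ∩ C k) t)) := by
            intro t
            rw [← hlogy t]
            rcases le_total (marg p M t) (∏ k, marg p (M ∩ C k) t) with hle | hle
            · have h1 : marg p M t - ∏ k, marg p (M ∩ C k) t ≤ 0 := sub_nonpos.mpr hle
              have h2 : Real.log (marg p M t) - Real.log (∏ k, marg p (M ∩ C k) t) ≤ 0 :=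
                sub_nonpos.mpr ((Real.log_le_log_iff (margpos M t) (hypos t)).mpr hle)
              have := mul_nonneg (neg_nonneg.mpr h1) (neg_nonneg.mpr h2)
              rwa [neg_mul_neg] at this
            · exact mul_nonneg (sub_nonneg.mpr hle)
                (sub_nonneg.mpr ((Real.log_le_log_iff (hypos t) (margpos M t)).mpr hle))
          have hall := (Finset.sum_eq_zero_iff_of_nonneg
            (fun t _ => hnn t)).mp hS i (Finset.mem_univ i)
          by_contra hne2
          rcases lt_or_gt_of_ne hne2 with hlt | hlt
          · have l1 : Real.log (marg p M i) < Real.log (∏ k, marg p (M ∩ C k) i) :=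
              Real.log_lt_log (margpos M i) hlt
            rw [← hlogy i] at hall
            have := mul_pos_of_neg_of_neg (sub_neg.mpr hlt) (sub_neg.mpr l1)
            exact absurd hall (ne_of_gt this)
          · have l1 : Real.log (∏ k, marg p (M ∩ C k) i) < Real.log (marg p M i) :=
              Real.log_lt_log (hypos i) hlt
            rw [← hlogy i] at hall
            have := mul_pos (sub_pos.mpr hlt) (sub_pos.mpr l1)
            exact absurd hall (ne_of_gt this)
        · -- M is contained in a single class
          push_neg at hmix
          obtain ⟨k0, hk0⟩ := hmix
          rw [← Finset.mul_prod_erase Finset.univ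
            (fun k => marg p (M ∩ C k) i) (Finset.mem_univ k0),
            Finset.inter_eq_left.mpr hk0]
          have hone : ∀ k ∈ Finset.univ.erase k0, marg p (M ∩ C k) i = 1 := by
            intro k hk
            have hkk0 : k ≠ k0 := Finset.ne_of_mem_erase hk
            have hemp : M ∩ C k = ∅ := by
              refine Finset.eq_empty_of_forall_notMem fun w hw => ?_
              obtain ⟨hwM, hwC⟩ := Finset.mem_inter.mp hw
              exact Finset.disjoint_left.mp (hdisj k k0 hkk0) hwC (hk0 hwM)
            rw [hemp, marg1]
          rw [Finset.prod_congr rfl hone, Finset.prod_const_one, mul_one]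
    rw [main D Finset.Subset.rfl i]
    exact Finset.prod_congr rfl fun k _ => by rw [Finset.inter_eq_right.mpr (hsub k)]
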